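/- Let D, E, F be n×n complex matrices such that D and F are Hermitian positive semidefinite, E is Hermitian, and D+E is positive semidefinite. Then the matrices F(D+E)+I and FD+I are invertible and, in the Loewner order, (D+E)(F(D+E)+I)^{-1} ≤ D(FD+I)^{-1} + (DF+I)^{-1} E (FD+I)^{-1}. -/

import Mathlib

open ComplexOrder

open Matrix

/-- Let `D`, `E`, `F` be `n × n` complex matrices such that `D` and `F` are Hermitian positive
semidefinite, `E` is Hermitian, and `D + E` is positive semidefinite. Then `F (D + E) + I` and
`F D + I` are invertible and, in the Loewner order,
`(D + E) (F (D + E) + I)⁻¹ ≤ D (F D + I)⁻¹ + (D F + I)⁻¹ E (F D + I)⁻¹`. -/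
theorem psd_resolvent_loewner_ineq (n : ℕ) (D E F : Matrix (Fin n) (Fin n) ℂ)
    (hD : D.PosSemidef) (hF : F.PosSemidef) (hE : E.IsHermitian) (hDE : (D + E).PosSemidef) :
    IsUnit (F * (D + E) + 1) ∧ IsUnit (F * D + 1) ∧
      (D * (F * D + 1)⁻¹ + (D * F + 1)⁻¹ * E * (F * D + 1)⁻¹
        - (D + E) * (F * (D + E) + 1)⁻¹).PosSemidef := by
  classical
  set G := (open scoped MatrixOrder in CFC.sqrt F) with hGdef
  have hG : Matrix.PosSemidef G := by
    open scoped MatrixOrder in exact (CFC.sqrt_nonneg F).posSemidef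
  have hGH : Gᴴ = G := hG.isHermitian
  have hGG : G * G = F := by
    open scoped MatrixOrder in exact CFC.sqrt_mul_sqrt_self F hF.nonneg
  have keyPD : ∀ X : Matrix (Fin n) (Fin n) ℂ, Matrix.PosSemidef X →
      (G * X * G + 1).PosDef := by
    intro X hX
    have h1 : (Gᴴ * X * G).PosSemidef := hX.conjTranspose_mul_mul_same G
    rw [hGH] at h1
    exact Matrix.PosDef.posSemidef_add h1 Matrix.PosDef.one
  have keyU : ∀ X : Matrix (Fin n) (Fin n) ℂ, Matrix.PosSemidef X → IsUnit (F * X + 1) := by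
    intro X hX
    rw [Matrix.isUnit_iff_isUnit_det]
    have hdet : (F * X + 1).det = (G * X * G + 1).det := by
      rw [← hGG, Matrix.mul_assoc, add_comm, Matrix.det_one_add_mul_comm, Matrix.mul_assoc,
        add_comm]
    rw [hdet]
    exact (keyPD X hX).det_pos.ne'.isUnit
  have hWu : IsUnit (F * (D + E) + 1) := keyU _ hDE
  have hUu : IsUnit (F * D + 1) := keyU _ hD
  have hVu : IsUnit (D * F + 1) := by
    rw [Matrix.isUnit_iff_isUnit_det, add_comm, Matrix.det_one_add_mul_comm, add_comm]
    exact (Matrix.isUnit_iff_isUnit_det _).mp hUu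
  have hWd : IsUnit (F * (D + E) + 1).det := (Matrix.isUnit_iff_isUnit_det _).mp hWu
  have hUd : IsUnit (F * D + 1).det := (Matrix.isUnit_iff_isUnit_det _).mp hUu
  have hVd : IsUnit (D * F + 1).det := (Matrix.isUnit_iff_isUnit_det _).mp hVu
  refine ⟨hWu, hUu, ?_⟩
  -- notation: U = F*D+1, V = D*F+1, W = F*(D+E)+1
  have main : D * (F * D + 1)⁻¹ + (D * F + 1)⁻¹ * E * (F * D + 1)⁻¹
        - (D + E) * (F * (D + E) + 1)⁻¹
      = (D * F + 1)⁻¹ * (E * ((F * (D + E) + 1)⁻¹ * F) * E) * (F * D + 1)⁻¹ := by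
    have cancel : ∀ A B : Matrix (Fin n) (Fin n) ℂ,
        (D * F + 1) * A * (F * D + 1) = (D * F + 1) * B * (F * D + 1) → A = B := by
      intro A B h
      have h2 := congrArg (fun M => (D * F + 1)⁻¹ * M * (F * D + 1)⁻¹) h
      simpa only [Matrix.mul_assoc, Matrix.mul_nonsing_inv _ hUd, Matrix.mul_one,
        Matrix.nonsing_inv_mul_cancel_left _ _ hVd] using h2
    apply cancel
    have hrhs : (D * F + 1) * ((D * F + 1)⁻¹ * (E * ((F * (D + E) + 1)⁻¹ * F) * E)
          * (F * D + 1)⁻¹) * (F * D + 1)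
        = E * ((F * (D + E) + 1)⁻¹ * F) * E := by
      rw [← Matrix.mul_assoc, Matrix.mul_nonsing_inv_cancel_left _ _ hVd,
        Matrix.nonsing_inv_mul_cancel_right _ _ hUd]
    rw [hrhs]
    have f1 : (D * F + 1) * (D + E) = D * (F * (D + E) + 1) + E := by noncomm_ring
    have f2 : F * D + 1 = F * (D + E) + 1 - F * E := by noncomm_ring
    have e1 : (D * F + 1) * ((D + E) * (F * (D + E) + 1)⁻¹)
        = D + E * (F * (D + E) + 1)⁻¹ := by
      rw [← Matrix.mul_assoc, f1, Matrix.add_mul, Matrix.mul_assoc,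
        Matrix.mul_nonsing_inv _ hWd, Matrix.mul_one]
    have e2 : E * (F * (D + E) + 1)⁻¹ * (F * D + 1)
        = E - E * ((F * (D + E) + 1)⁻¹ * F) * E := by
      rw [f2, Matrix.mul_sub, Matrix.mul_assoc, Matrix.nonsing_inv_mul _ hWd, Matrix.mul_one,
        Matrix.mul_assoc, Matrix.mul_assoc, Matrix.mul_assoc]
    have tA : (D * F + 1) * (D * (F * D + 1)⁻¹) * (F * D + 1) = (D * F + 1) * D := by
      rw [← Matrix.mul_assoc, Matrix.nonsing_inv_mul_cancel_right _ _ hUd]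
    have tB : (D * F + 1) * ((D * F + 1)⁻¹ * E * (F * D + 1)⁻¹) * (F * D + 1) = E := by
      simp only [← Matrix.mul_assoc]
      rw [Matrix.mul_nonsing_inv _ hVd, Matrix.one_mul,
        Matrix.nonsing_inv_mul_cancel_right _ _ hUd]
    have tC : (D * F + 1) * ((D + E) * (F * (D + E) + 1)⁻¹) * (F * D + 1)
        = D * (F * D + 1) + (E - E * ((F * (D + E) + 1)⁻¹ * F) * E) := by
      rw [e1, Matrix.add_mul, e2]
    calc (D * F + 1) * (D * (F * D + 1)⁻¹ + (D * F + 1)⁻¹ * E * (F * D + 1)⁻¹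
          - (D + E) * (F * (D + E) + 1)⁻¹) * (F * D + 1)
        = (D * F + 1) * (D * (F * D + 1)⁻¹) * (F * D + 1)
          + (D * F + 1) * ((D * F + 1)⁻¹ * E * (F * D + 1)⁻¹) * (F * D + 1)
          - (D * F + 1) * ((D + E) * (F * (D + E) + 1)⁻¹) * (F * D + 1) := by
          noncomm_ring
      _ = (D * F + 1) * D + E
          - (D * (F * D + 1) + (E - E * ((F * (D + E) + 1)⁻¹ * F) * E)) := by
          rw [tA, tB, tC]
      _ = E * ((F * (D + E) + 1)⁻¹ * F) * E := by noncomm_ring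
  rw [main]
  -- W⁻¹ * F = G * (G*(D+E)*G + 1)⁻¹ * G is psd
  have hK : (G * (D + E) * G + 1).PosDef := keyPD _ hDE
  have hKd : IsUnit (G * (D + E) * G + 1).det := (Matrix.isUnit_iff_isUnit_det _).mp hK.isUnit
  have hWG : (F * (D + E) + 1) * (G * (G * (D + E) * G + 1)⁻¹ * G) = F := by
    have h1 : (F * (D + E) + 1) * G = G * (G * (D + E) * G + 1) := by
      rw [← hGG]; noncomm_ring
    rw [← Matrix.mul_assoc, ← Matrix.mul_assoc, h1, Matrix.mul_assoc G,
      Matrix.mul_nonsing_inv _ hKd, Matrix.mul_one, hGG]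
  have hWF : (F * (D + E) + 1)⁻¹ * F = G * (G * (D + E) * G + 1)⁻¹ * G := by
    have h2 := congrArg (fun M => (F * (D + E) + 1)⁻¹ * M) hWG
    simpa only [Matrix.nonsing_inv_mul_cancel_left _ _ hWd] using h2.symm
  rw [hWF]
  have hP : Matrix.PosSemidef (G * (G * (D + E) * G + 1)⁻¹ * G) := by
    have := (hK.inv.posSemidef).conjTranspose_mul_mul_same G
    rwa [hGH] at this
  have hfin := hP.conjTranspose_mul_mul_same (E * (F * D + 1)⁻¹)
  have hBH : (E * (F * D + 1)⁻¹)ᴴ = (D * F + 1)⁻¹ * E := by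
    have hUH : (F * D + 1)ᴴ = D * F + 1 := by
      simp [Matrix.conjTranspose_add, Matrix.conjTranspose_mul, hD.isHermitian.eq,
        hF.isHermitian.eq]
    rw [Matrix.conjTranspose_mul, Matrix.conjTranspose_nonsing_inv, hUH, hE.eq]
  rw [hBH] at hfin
  have heq : (D * F + 1)⁻¹ * (E * (G * (G * (D + E) * G + 1)⁻¹ * G) * E) * (F * D + 1)⁻¹
      = (D * F + 1)⁻¹ * E * (G * (G * (D + E) * G + 1)⁻¹ * G) * (E * (F * D + 1)⁻¹) := by
    noncomm_ring
  rw [heq]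
  exact hfin
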